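/- Define Φ : ℝ³ \ {0} → ℝ by Φ(x,y,t) = ((x²+y²)² + t²)^{−1/2}. Then Φ is Δ_H-harmonic away from the origin, i.e. Δ_H Φ(v) = 0 for every v ≠ 0, and Φ is homogeneous of degree −2 with respect to the Heisenberg dilations: Φ(r x, r y, r² t) = r^{−2} Φ(x,y,t) for every r > 0 and every (x,y,t) ≠ 0. -/

import Mathlib

noncomputable section

/-- The Korányi norm ρ(x,y,t) = ((x²+y²)² + t²)^{1/4} on ℝ³ (coordinates v 0 = x,
v 1 = y, v 2 = t). -/
def rho3 (v : Fin 3 → ℝ) : ℝ := ((v 0 ^ 2 + v 1 ^ 2) ^ 2 + v 2 ^ 2) ^ ((1 : ℝ) / 4)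

/-- The horizontal derivative X u(v) = ∂ₓ u(v) + 2y ∂ₜ u(v). -/
def Xd (u : (Fin 3 → ℝ) → ℝ) (v : Fin 3 → ℝ) : ℝ :=
  fderiv ℝ u v (Pi.single 0 1) + 2 * v 1 * fderiv ℝ u v (Pi.single 2 1)

/-- The horizontal derivative Y u(v) = ∂_y u(v) − 2x ∂ₜ u(v). -/
def Yd (u : (Fin 3 → ℝ) → ℝ) (v : Fin 3 → ℝ) : ℝ :=
  fderiv ℝ u v (Pi.single 1 1) - 2 * v 0 * fderiv ℝ u v (Pi.single 2 1)

/-- The sub-Laplacian Δ_H u = X(X u) + Y(Y u). -/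
def DeltaHd (u : (Fin 3 → ℝ) → ℝ) (v : Fin 3 → ℝ) : ℝ := Xd (Xd u) v + Yd (Yd u) v

/-- Folland's fundamental solution (up to a constant): Φ(x,y,t) = ((x²+y²)² + t²)^{−1/2}. -/
def Phi (v : Fin 3 → ℝ) : ℝ := ((v 0 ^ 2 + v 1 ^ 2) ^ 2 + v 2 ^ 2) ^ (-(1 : ℝ) / 2)

namespace S17

def q (v : Fin 3 → ℝ) : ℝ := (v 0 ^ 2 + v 1 ^ 2) ^ 2 + v 2 ^ 2

abbrev pr (i : Fin 3) : (Fin 3 → ℝ) →L[ℝ] ℝ := ContinuousLinearMap.proj i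

lemma hasPr (i : Fin 3) (v : Fin 3 → ℝ) : HasFDerivAt (fun w : Fin 3 → ℝ => w i) (pr i) v :=
  (pr i).hasFDerivAt

def Lq (v : Fin 3 → ℝ) : (Fin 3 → ℝ) →L[ℝ] ℝ :=
  (4 * v 0 * (v 0 ^ 2 + v 1 ^ 2)) • pr 0 + (4 * v 1 * (v 0 ^ 2 + v 1 ^ 2)) • pr 1 +
    (2 * v 2) • pr 2

lemma hasq (v : Fin 3 → ℝ) : HasFDerivAt q (Lq v) v := by
  have h0 := hasPr 0 v; have h1 := hasPr 1 v; have h2 := hasPr 2 v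
  have hs := (h0.mul h0).add (h1.mul h1)
  have hchain := (hs.mul hs).add (h2.mul h2)
  have hfun : (fun w : Fin 3 → ℝ => (w 0 * w 0 + w 1 * w 1) * (w 0 * w 0 + w 1 * w 1)
      + w 2 * w 2) = q := by
    funext w; simp only [q]; ring
  change HasFDerivAt (fun w : Fin 3 → ℝ => (w 0 * w 0 + w 1 * w 1) * (w 0 * w 0 + w 1 * w 1)
      + w 2 * w 2) _ v at hchain
  rw [hfun] at hchain
  refine hchain.congr_fderiv ?_
  refine ContinuousLinearMap.ext fun w => ?_
  simp only [Lq, pr, Pi.add_apply, Pi.mul_apply, ContinuousLinearMap.add_apply, ContinuousLinearMap.smul_apply,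
    ContinuousLinearMap.proj_apply, smul_eq_mul]
  ring

lemma q_pos {v : Fin 3 → ℝ} (hv : v ≠ 0) : 0 < q v := by
  have h1 : (0:ℝ) ≤ (v 0 ^ 2 + v 1 ^ 2) ^ 2 + v 2 ^ 2 := by positivity
  rcases h1.lt_or_eq with h | h
  · exact h
  exfalso
  apply hv
  have h2 : v 2 ^ 2 = 0 := by nlinarith [sq_nonneg (v 0 ^ 2 + v 1 ^ 2), sq_nonneg (v 2)]
  have h0 : v 0 ^ 2 = 0 := by nlinarith [sq_nonneg (v 0), sq_nonneg (v 1), sq_nonneg (v 0 ^ 2 + v 1 ^ 2)]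
  have h1' : v 1 ^ 2 = 0 := by nlinarith [sq_nonneg (v 0), sq_nonneg (v 1), sq_nonneg (v 0 ^ 2 + v 1 ^ 2)]
  funext i
  fin_cases i <;>
    simp [pow_eq_zero_iff, (two_ne_zero : (2:ℕ) ≠ 0)] at h0 h1' h2 <;> simp [h0, h1', h2]

def P1 (v : Fin 3 → ℝ) : ℝ := v 0 * (v 0 ^ 2 + v 1 ^ 2) + v 1 * v 2
def P2 (v : Fin 3 → ℝ) : ℝ := v 1 * (v 0 ^ 2 + v 1 ^ 2) - v 0 * v 2

def LP1 (v : Fin 3 → ℝ) : (Fin 3 → ℝ) →L[ℝ] ℝ :=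
  (v 0 ^ 2 + v 1 ^ 2 + 2 * v 0 ^ 2) • pr 0 + (2 * v 0 * v 1 + v 2) • pr 1 + (v 1) • pr 2
def LP2 (v : Fin 3 → ℝ) : (Fin 3 → ℝ) →L[ℝ] ℝ :=
  (2 * v 0 * v 1 - v 2) • pr 0 + (v 0 ^ 2 + v 1 ^ 2 + 2 * v 1 ^ 2) • pr 1 + (-(v 0)) • pr 2

lemma hasP1 (v : Fin 3 → ℝ) : HasFDerivAt P1 (LP1 v) v := by
  have h0 := hasPr 0 v; have h1 := hasPr 1 v; have h2 := hasPr 2 v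
  have hchain := (h0.mul ((h0.mul h0).add (h1.mul h1))).add (h1.mul h2)
  have hfun : (fun w : Fin 3 → ℝ => w 0 * (w 0 * w 0 + w 1 * w 1) + w 1 * w 2) = P1 := by
    funext w; simp only [P1]; ring
  change HasFDerivAt (fun w : Fin 3 → ℝ => w 0 * (w 0 * w 0 + w 1 * w 1) + w 1 * w 2) _ v at hchain
  rw [hfun] at hchain
  refine hchain.congr_fderiv ?_
  refine ContinuousLinearMap.ext fun w => ?_
  simp only [LP1, pr, Pi.add_apply, Pi.mul_apply, ContinuousLinearMap.add_apply, ContinuousLinearMap.smul_apply,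
    ContinuousLinearMap.proj_apply, smul_eq_mul]
  ring

lemma hasP2 (v : Fin 3 → ℝ) : HasFDerivAt P2 (LP2 v) v := by
  have h0 := hasPr 0 v; have h1 := hasPr 1 v; have h2 := hasPr 2 v
  have hchain := (h1.mul ((h0.mul h0).add (h1.mul h1))).sub (h0.mul h2)
  have hfun : (fun w : Fin 3 → ℝ => w 1 * (w 0 * w 0 + w 1 * w 1) - w 0 * w 2) = P2 := by
    funext w; simp only [P2]; ring
  change HasFDerivAt (fun w : Fin 3 → ℝ => w 1 * (w 0 * w 0 + w 1 * w 1) - w 0 * w 2) _ v at hchain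
  rw [hfun] at hchain
  refine hchain.congr_fderiv ?_
  refine ContinuousLinearMap.ext fun w => ?_
  simp only [LP2, pr, Pi.add_apply, Pi.mul_apply, ContinuousLinearMap.add_apply, ContinuousLinearMap.sub_apply,
    ContinuousLinearMap.smul_apply, ContinuousLinearMap.proj_apply, smul_eq_mul, neg_smul]
  ring

lemma hasPhi {v : Fin 3 → ℝ} (hv : q v ≠ 0) :
    HasFDerivAt Phi ((-(1:ℝ)/2 * q v ^ (-(1:ℝ)/2 - 1)) • Lq v) v :=
  (hasq v).rpow_const (Or.inl hv)

def F1 (v : Fin 3 → ℝ) : ℝ := -2 * P1 v * q v ^ ((-3:ℝ)/2)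
def F2 (v : Fin 3 → ℝ) : ℝ := -2 * P2 v * q v ^ ((-3:ℝ)/2)

lemma hasF1 {v : Fin 3 → ℝ} (hv : q v ≠ 0) :
    HasFDerivAt F1 ((-2 * P1 v) • (((-3:ℝ)/2 * q v ^ ((-3:ℝ)/2 - 1)) • Lq v)
      + (q v ^ ((-3:ℝ)/2)) • ((-2 : ℝ) • LP1 v)) v :=
  ((hasP1 v).const_mul (-2)).mul ((hasq v).rpow_const (Or.inl hv))

lemma hasF2 {v : Fin 3 → ℝ} (hv : q v ≠ 0) :
    HasFDerivAt F2 ((-2 * P2 v) • (((-3:ℝ)/2 * q v ^ ((-3:ℝ)/2 - 1)) • Lq v)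
      + (q v ^ ((-3:ℝ)/2)) • ((-2 : ℝ) • LP2 v)) v :=
  ((hasP2 v).const_mul (-2)).mul ((hasq v).rpow_const (Or.inl hv))

lemma XdPhi {v : Fin 3 → ℝ} (hv : q v ≠ 0) : Xd Phi v = F1 v := by
  have e : -(1:ℝ)/2 - 1 = (-3:ℝ)/2 := by norm_num
  simp only [Xd, (hasPhi hv).fderiv, Lq, pr, ContinuousLinearMap.add_apply,
    ContinuousLinearMap.smul_apply, ContinuousLinearMap.proj_apply, smul_eq_mul,
    Pi.single_apply, F1, P1, e, reduceIte]
  norm_num [Fin.ext_iff]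
  ring


lemma YdPhi {v : Fin 3 → ℝ} (hv : q v ≠ 0) : Yd Phi v = F2 v := by
  have e : -(1:ℝ)/2 - 1 = (-3:ℝ)/2 := by norm_num
  simp only [Yd, (hasPhi hv).fderiv, Lq, pr, ContinuousLinearMap.add_apply,
    ContinuousLinearMap.smul_apply, ContinuousLinearMap.proj_apply, smul_eq_mul,
    Pi.single_apply, F2, P2, e, reduceIte]
  norm_num [Fin.ext_iff]
  ring

lemma final {v : Fin 3 → ℝ} (hv : q v ≠ 0) : Xd F1 v + Yd F2 v = 0 := by
  have e : (-3:ℝ)/2 - 1 = (-5:ℝ)/2 := by norm_num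
  have h32 : q v ^ (-(3/2):ℝ) = q v ^ (-(5/2):ℝ) * q v := by
    rw [← Real.rpow_add_one hv]; norm_num
  simp only [Xd, Yd, (hasF1 hv).fderiv, (hasF2 hv).fderiv, Lq, LP1, LP2, P1, P2, pr,
    ContinuousLinearMap.add_apply, ContinuousLinearMap.smul_apply,
    ContinuousLinearMap.proj_apply, smul_eq_mul, Pi.single_apply, e, reduceIte]
  norm_num [Fin.ext_iff]
  rw [h32]
  simp only [q]
  ring

lemma harmonic {v : Fin 3 → ℝ} (hv : v ≠ 0) : Xd (Xd Phi) v + Yd (Yd Phi) v = 0 := by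
  have hq : q v ≠ 0 := (q_pos hv).ne'
  have hcont : Continuous q := by unfold q; fun_prop
  have hopen : IsOpen {w : Fin 3 → ℝ | q w ≠ 0} := isOpen_compl_singleton.preimage hcont
  have hmem : {w : Fin 3 → ℝ | q w ≠ 0} ∈ nhds v := hopen.mem_nhds hq
  have hX : Xd Phi =ᶠ[nhds v] F1 := Filter.eventuallyEq_of_mem hmem fun w hw => XdPhi hw
  have hY : Yd Phi =ᶠ[nhds v] F2 := Filter.eventuallyEq_of_mem hmem fun w hw => YdPhi hw
  have e1 : Xd (Xd Phi) v = Xd F1 v := by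
    show fderiv ℝ (Xd Phi) v (Pi.single 0 1) + 2 * v 1 * fderiv ℝ (Xd Phi) v (Pi.single 2 1)
      = Xd F1 v
    rw [hX.fderiv_eq (𝕜 := ℝ)]; rfl
  have e2 : Yd (Yd Phi) v = Yd F2 v := by
    show fderiv ℝ (Yd Phi) v (Pi.single 1 1) - 2 * v 0 * fderiv ℝ (Yd Phi) v (Pi.single 2 1)
      = Yd F2 v
    rw [hY.fderiv_eq (𝕜 := ℝ)]; rfl
  rw [e1, e2]
  exact final hq

end S17

/-- Φ is Δ_H-harmonic away from the origin and homogeneous of degree −2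
with respect to the Heisenberg dilations δ_r(x,y,t) = (rx, ry, r²t). -/
theorem stmt17 :
    (∀ v : Fin 3 → ℝ, v ≠ 0 → DeltaHd Phi v = 0) ∧
    (∀ r : ℝ, 0 < r → ∀ v : Fin 3 → ℝ, v ≠ 0 →
      Phi ![r * v 0, r * v 1, r ^ 2 * v 2] = r ^ (-2 : ℤ) * Phi v) := by
  constructor
  · intro v hv
    exact S17.harmonic hv
  · intro r hr v hv
    simp only [Phi, Matrix.cons_val_zero, Matrix.cons_val_one, Matrix.head_cons,
      Matrix.cons_val_two, Matrix.tail_cons]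
    have h4 : ((r * v 0) ^ 2 + (r * v 1) ^ 2) ^ 2 + (r ^ 2 * v 2) ^ 2
        = r ^ 4 * ((v 0 ^ 2 + v 1 ^ 2) ^ 2 + v 2 ^ 2) := by ring
    rw [h4, Real.mul_rpow (by positivity) (by positivity)]
    congr 1
    rw [← Real.rpow_natCast r 4, ← Real.rpow_mul hr.le,
      show ((4 : ℕ) : ℝ) * (-(1 : ℝ) / 2) = ((-2 : ℤ) : ℝ) by norm_num,
      Real.rpow_intCast]

end
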